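/- Let p_i, p_j ∈ ℝ³ be two end nodes with chord L = p_i − p_j ≠ 0, and let a ∈ ℝ³ be a known point. Suppose q, q' ∈ ℝ³ are points such that p_j, q, a are not collinear (i.e., (p_j − q) × (p_j − a) ≠ 0), p_j, q', a are not collinear, and q, q' share the same geometric features with respect to a and L, namely: (i) ‖q − a‖ = ‖q' − a‖, (ii) angle(q − a, L) = angle(q' − a, L) with L × (q − a) ≠ 0 and L × (q' − a) ≠ 0, (iii) ⟨(L × (q − a))/‖L × (q − a)‖, (L × (a − p_j))/‖L × (a − p_j)‖⟩ = ⟨(L × (q' − a))/‖L × (q' − a)‖, (L × (a − p_j))/‖L × (a − p_j)‖⟩ where L × (a − p_j) ≠ 0, and (iv) ⟨L, (p_j − q) × (p_j − a)⟩ = ⟨L, (p_j − q') × (p_j − a)⟩. Then q = q'. -/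

import Mathlib

open RealInnerProductSpace Matrix

noncomputable def cross3 (x y : EuclideanSpace ℝ (Fin 3)) : EuclideanSpace ℝ (Fin 3) :=
  WithLp.toLp 2 (crossProduct x y)

private lemma inner_eq_dot (x y : EuclideanSpace ℝ (Fin 3)) : ⟪x, y⟫ = dotProduct x y := by
  simp [PiLp.inner_apply, dotProduct, RCLike.inner_apply, mul_comm]

private lemma bac_cab (a b c : Fin 3 → ℝ) :
    crossProduct a (crossProduct b c) = (a ⬝ᵥ c) • b - (a ⬝ᵥ b) • c := by
  simp_rw [cross_apply, vec3_dotProduct]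
  funext i; fin_cases i <;> simp <;> ring

private lemma cross_neg_sub_neg (x y : Fin 3 → ℝ) :
    crossProduct (-x - y) (-x) = crossProduct y x := by
  simp_rw [cross_apply]
  funext i; fin_cases i <;> simp <;> ring

private lemma eq_zero_of_dot_self (v : Fin 3 → ℝ) (h : v ⬝ᵥ v = 0) : v = 0 := by
  funext i
  have h2 : ∀ j ∈ Finset.univ, 0 ≤ v j * v j := fun j _ => mul_self_nonneg (v j)
  have := (Finset.sum_eq_zero_iff_of_nonneg h2).mp h i (Finset.mem_univ i)
  exact mul_self_eq_zero.mp this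

/-- If `L ×₃ b ≠ 0` and `v` is orthogonal to `L`, `b`, and `L ×₃ b`, then `v = 0`. -/
private lemma perp_three {v L b : Fin 3 → ℝ} (hw : crossProduct L b ≠ 0)
    (h1 : v ⬝ᵥ L = 0) (h2 : v ⬝ᵥ b = 0) (h3 : v ⬝ᵥ (crossProduct L b) = 0) : v = 0 := by
  set w := crossProduct L b with hwdef
  have hvw : crossProduct v w = 0 := by
    rw [hwdef, bac_cab, h1, h2]; simp
  have hlag : (crossProduct v w) ⬝ᵥ (crossProduct v w) =
      (v ⬝ᵥ v) * (w ⬝ᵥ w) - (v ⬝ᵥ w) * (w ⬝ᵥ v) := cross_dot_cross v w v w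
  rw [hvw, h3, dotProduct_comm w v, h3] at hlag
  simp only [zero_dotProduct, mul_zero, zero_mul, sub_zero] at hlag
  have hww : w ⬝ᵥ w ≠ 0 := fun h => hw (eq_zero_of_dot_self w h)
  have : v ⬝ᵥ v = 0 := by
    rcases mul_eq_zero.mp hlag.symm with h' | h'
    · exact h'
    · exact absurd h' hww
  exact eq_zero_of_dot_self v this

theorem point_uniquely_determined_by_features
    (pi pj a q q' : EuclideanSpace ℝ (Fin 3))
    (L : EuclideanSpace ℝ (Fin 3)) (hLdef : L = pi - pj) (hL : L ≠ 0)
    (hnc : cross3 (pj - q) (pj - a) ≠ 0)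
    (hnc' : cross3 (pj - q') (pj - a) ≠ 0)
    (hLq : cross3 L (q - a) ≠ 0)
    (hLq' : cross3 L (q' - a) ≠ 0)
    (hLa : cross3 L (a - pj) ≠ 0)
    (hdist : ‖q - a‖ = ‖q' - a‖)
    (hangle : InnerProductGeometry.angle (q - a) L = InnerProductGeometry.angle (q' - a) L)
    (hcos : ⟪‖cross3 L (q - a)‖⁻¹ • cross3 L (q - a),
              ‖cross3 L (a - pj)‖⁻¹ • cross3 L (a - pj)⟫ =
            ⟪‖cross3 L (q' - a)‖⁻¹ • cross3 L (q' - a),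
              ‖cross3 L (a - pj)‖⁻¹ • cross3 L (a - pj)⟫)
    (hsign : ⟪L, cross3 (pj - q) (pj - a)⟫ = ⟪L, cross3 (pj - q') (pj - a)⟫) :
    q = q' := by
  set u : EuclideanSpace ℝ (Fin 3) := q - a with hu
  set u' : EuclideanSpace ℝ (Fin 3) := q' - a with hu'
  set b : EuclideanSpace ℝ (Fin 3) := a - pj with hb
  have hune : u ≠ 0 := by
    intro h; apply hLq; rw [h]; show WithLp.toLp 2 (crossProduct (L : Fin 3 → ℝ) 0) = 0; rw [map_zero]; rfl
  have hu'ne : u' ≠ 0 := by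
    intro h; apply hLq'; rw [h]; show WithLp.toLp 2 (crossProduct (L : Fin 3 → ℝ) 0) = 0; rw [map_zero]; rfl
  have hnu : ‖u‖ ≠ 0 := norm_ne_zero_iff.mpr hune
  have hnL : ‖L‖ ≠ 0 := norm_ne_zero_iff.mpr hL
  -- Step B: equal inner products with L
  have hinner : ⟪u, L⟫ = ⟪u', L⟫ := by
    have h := congrArg Real.cos hangle
    rw [InnerProductGeometry.cos_angle, InnerProductGeometry.cos_angle] at h
    rw [← hdist] at h
    field_simp at h
    exact h
  have hdot_uu : dotProduct (u : Fin 3 → ℝ) u = dotProduct (u' : Fin 3 → ℝ) u' := by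
    rw [← inner_eq_dot, ← inner_eq_dot, real_inner_self_eq_norm_sq, real_inner_self_eq_norm_sq,
      hdist]
  have hdot_uL : dotProduct (u : Fin 3 → ℝ) L = dotProduct (u' : Fin 3 → ℝ) L := by
    rw [← inner_eq_dot, ← inner_eq_dot]; exact hinner
  -- Step C: equal norms of cross products
  have hcrossnorm : ‖cross3 L u‖ = ‖cross3 L u'‖ := by
    have h1 : ‖cross3 L u‖ ^ 2 = ‖cross3 L u'‖ ^ 2 := by
      rw [← real_inner_self_eq_norm_sq, ← real_inner_self_eq_norm_sq, inner_eq_dot, inner_eq_dot]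
      show dotProduct (crossProduct (L : Fin 3 → ℝ) u) (crossProduct (L : Fin 3 → ℝ) u) =
        dotProduct (crossProduct (L : Fin 3 → ℝ) u') (crossProduct (L : Fin 3 → ℝ) u')
      rw [cross_dot_cross, cross_dot_cross,
        dotProduct_comm (L : Fin 3 → ℝ) u, dotProduct_comm (L : Fin 3 → ℝ) u',
        hdot_uL, hdot_uu]
    have h2 := congrArg Real.sqrt h1
    rwa [Real.sqrt_sq (norm_nonneg _), Real.sqrt_sq (norm_nonneg _)] at h2
  -- Step D: equal inner products with L × b
  have hcw : ⟪cross3 L u, cross3 L b⟫ = ⟪cross3 L u', cross3 L b⟫ := by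
    rw [real_inner_smul_left, real_inner_smul_left, real_inner_smul_right,
      real_inner_smul_right, hcrossnorm] at hcos
    have h1 : ‖cross3 L u'‖ ≠ 0 := norm_ne_zero_iff.mpr hLq'
    have h2 : ‖cross3 L b‖ ≠ 0 := norm_ne_zero_iff.mpr hLa
    field_simp at hcos
    exact hcos
  -- Step E: simplify the triple-product hypothesis
  have hq : pj - q = -b - u := by rw [hu, hb]; abel
  have hq' : pj - q' = -b - u' := by rw [hu', hb]; abel
  have hpja : pj - a = -b := by rw [hb]; abel
  have hcb : ⟪L, cross3 u b⟫ = ⟪L, cross3 u' b⟫ := by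
    have e1 : cross3 (pj - q) (pj - a) = cross3 u b := by
      rw [hq, hpja]; exact congrArg (WithLp.toLp 2) (cross_neg_sub_neg (b : Fin 3 → ℝ) u)
    have e2 : cross3 (pj - q') (pj - a) = cross3 u' b := by
      rw [hq', hpja]; exact congrArg (WithLp.toLp 2) (cross_neg_sub_neg (b : Fin 3 → ℝ) u')
    rw [e1, e2] at hsign; exact hsign
  have hE : dotProduct (b : Fin 3 → ℝ) (crossProduct (L : Fin 3 → ℝ) u) =
      dotProduct (b : Fin 3 → ℝ) (crossProduct (L : Fin 3 → ℝ) u') := by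
    have t1 : dotProduct (L : Fin 3 → ℝ) (crossProduct (u : Fin 3 → ℝ) b) =
        dotProduct (b : Fin 3 → ℝ) (crossProduct (L : Fin 3 → ℝ) u) := by
      rw [triple_product_permutation, triple_product_permutation]
    have t2 : dotProduct (L : Fin 3 → ℝ) (crossProduct (u' : Fin 3 → ℝ) b) =
        dotProduct (b : Fin 3 → ℝ) (crossProduct (L : Fin 3 → ℝ) u') := by
      rw [triple_product_permutation, triple_product_permutation]
    have h := hcb
    rw [inner_eq_dot, inner_eq_dot] at h
    rw [← t1, ← t2]; exact h
  have hD : dotProduct (crossProduct (L : Fin 3 → ℝ) u) (crossProduct (L : Fin 3 → ℝ) b) =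
      dotProduct (crossProduct (L : Fin 3 → ℝ) u') (crossProduct (L : Fin 3 → ℝ) b) := by
    have h := hcw
    rw [inner_eq_dot, inner_eq_dot] at h
    exact h
  -- Step F: the difference of the cross products vanishes
  set v : Fin 3 → ℝ := crossProduct (L : Fin 3 → ℝ) u - crossProduct (L : Fin 3 → ℝ) u' with hv
  have hv1 : v ⬝ᵥ (L : Fin 3 → ℝ) = 0 := by
    rw [hv, sub_dotProduct,
      dotProduct_comm (crossProduct (L : Fin 3 → ℝ) u) L,
      dotProduct_comm (crossProduct (L : Fin 3 → ℝ) u') L,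
      dot_self_cross, dot_self_cross]; ring
  have hv2 : v ⬝ᵥ (b : Fin 3 → ℝ) = 0 := by
    rw [hv, sub_dotProduct,
      dotProduct_comm (crossProduct (L : Fin 3 → ℝ) u) b,
      dotProduct_comm (crossProduct (L : Fin 3 → ℝ) u') b, hE]; ring
  have hv3 : v ⬝ᵥ (crossProduct (L : Fin 3 → ℝ) b) = 0 := by
    rw [hv, sub_dotProduct, hD]; ring
  have hwne : crossProduct (L : Fin 3 → ℝ) b ≠ 0 := fun h => hLa (by show WithLp.toLp 2 (crossProduct (L : Fin 3 → ℝ) b) = 0; rw [h]; rfl)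
  have hvz : v = 0 := perp_three hwne hv1 hv2 hv3
  have hcross_eq : crossProduct (L : Fin 3 → ℝ) ((u : Fin 3 → ℝ) - u') = 0 := by
    rw [map_sub]; exact hvz
  -- Final step: d := u - u' is both parallel and orthogonal to L
  set d : Fin 3 → ℝ := (u : Fin 3 → ℝ) - u' with hd
  have hdL : dotProduct (L : Fin 3 → ℝ) d = 0 := by
    rw [hd, dotProduct_sub,
      dotProduct_comm (L : Fin 3 → ℝ) u, dotProduct_comm (L : Fin 3 → ℝ) u',
      hdot_uL]; ring
  have hlag : (crossProduct (L : Fin 3 → ℝ) d) ⬝ᵥ (crossProduct (L : Fin 3 → ℝ) d) =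
      (dotProduct (L : Fin 3 → ℝ) L) * (dotProduct d d) -
        (dotProduct (L : Fin 3 → ℝ) d) * (dotProduct d L) := cross_dot_cross L d L d
  rw [hcross_eq, hdL, dotProduct_comm d L, hdL] at hlag
  simp only [zero_dotProduct, mul_zero, zero_mul, sub_zero] at hlag
  have hLL : dotProduct (L : Fin 3 → ℝ) L ≠ 0 := fun h => hL (WithLp.ofLp_injective 2 (eq_zero_of_dot_self L h))
  have hdd : dotProduct d d = 0 := by
    rcases mul_eq_zero.mp hlag.symm with h | h
    · exact absurd h hLL
    · exact h
  have hdz : d = 0 := eq_zero_of_dot_self d hdd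
  have huu : u = u' := WithLp.ofLp_injective 2 (sub_eq_zero.mp hdz)
  have h : q - a = q' - a := by rw [← hu, ← hu']; exact huu
  have := congrArg (· + a) h
  simpa using this
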